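/- arXiv:1906.11002 — 2 statements merged into one kernel-verified Lean document; each statement's English description precedes it below -/
import Mathlib

section
/- For N = 1 and σ'(S₀,t₀) = 0 (Euler case), the one-step survival Brownian bridge payoff is an unbiased estimator of the Brownian bridge payoff: E[P̂] = E[P̃], where E[P̂] = ∫_ℝ φ(z)(1 − p̂₀(z)) q(Ŝ₁(z)) dz with p̂₀(z) = exp(−2(B−S₀)⁺(B−Ŝ₁(z))⁺ / (σ²h)), and E[P̃] = p̃₀ ∫_0^1 (1 − p̂₀*(u)) q(S̃₁(u)) du with S̃₁(u) = S₀ + μh + σ√h Φ⁻¹(p̃₀ u), p̃₀ = Φ((B − S₀ − μh)/(σ√h)), and p̂₀*(u) = exp(−2(B−S₀)(B−S̃₁(u)) / (σ²h)). -/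
open MeasureTheory Real

/-- Standard normal density. -/
noncomputable def stdGaussPDF (z : ℝ) : ℝ := Real.exp (-z ^ 2 / 2) / Real.sqrt (2 * Real.pi)

/-- Standard normal cumulative distribution function. -/
noncomputable def stdGaussCDF (c : ℝ) : ℝ := ∫ z in Set.Iic c, stdGaussPDF z

section Helpers
open Set

lemma pdf_pos (z : ℝ) : 0 < stdGaussPDF z := by
  unfold stdGaussPDF
  positivity

lemma pdf_eq (z : ℝ) : stdGaussPDF z = Real.exp (-(1/2) * z ^ 2) / Real.sqrt (2 * Real.pi) := by
  unfold stdGaussPDF; ring_nf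

lemma pdf_cont : Continuous stdGaussPDF := by
  unfold stdGaussPDF
  fun_prop

lemma pdf_integrable : Integrable stdGaussPDF := by
  have : Integrable (fun z : ℝ => Real.exp (-(1/2) * z ^ 2)) := integrable_exp_neg_mul_sq (by norm_num)
  have h2 := this.div_const (Real.sqrt (2 * Real.pi))
  have : stdGaussPDF = fun z => Real.exp (-(1/2) * z ^ 2) / Real.sqrt (2 * Real.pi) :=
    funext pdf_eq
  rw [this]; exact h2

lemma pdf_total : ∫ z, stdGaussPDF z = 1 := by
  have h := integral_gaussian (1/2 : ℝ)
  simp only [pdf_eq]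
  rw [integral_div, h]
  rw [div_eq_one_iff_eq (by positivity)]
  rw [show (2:ℝ) * Real.pi = Real.pi / (1/2) by ring]

lemma cdf_pos (c : ℝ) : 0 < stdGaussCDF c := by
  unfold stdGaussCDF
  rw [setIntegral_pos_iff_support_of_nonneg_ae]
  · have : Function.support stdGaussPDF = univ := by
      ext z; simp [Function.mem_support, (pdf_pos z).ne']
    rw [this]
    simp
  · filter_upwards with z using (pdf_pos z).le
  · exact pdf_integrable.integrableOn

lemma cdf_diff {a b : ℝ} (hab : a ≤ b) :
    stdGaussCDF b - stdGaussCDF a = ∫ z in Set.Ioc a b, stdGaussPDF z := by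
  unfold stdGaussCDF
  rw [← Iic_union_Ioc_eq_Iic hab,
    setIntegral_union (Iic_disjoint_Ioc le_rfl) measurableSet_Ioc
      pdf_integrable.integrableOn pdf_integrable.integrableOn]
  ring

lemma cdf_strictMono : StrictMono stdGaussCDF := by
  intro a b hab
  have h := cdf_diff hab.le
  have hpos : 0 < ∫ z in Set.Ioc a b, stdGaussPDF z := by
    rw [setIntegral_pos_iff_support_of_nonneg_ae]
    · have : Function.support stdGaussPDF = univ := by
        ext z; simp [Function.mem_support, (pdf_pos z).ne']
      rw [this]
      simpa using hab
    · filter_upwards with z using (pdf_pos z).le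
    · exact pdf_integrable.integrableOn
  linarith

lemma cdf_lt_one (c : ℝ) : stdGaussCDF c < 1 := by
  have h1 : stdGaussCDF c + ∫ z in Set.Ioi c, stdGaussPDF z = 1 := by
    unfold stdGaussCDF
    rw [intervalIntegral.integral_Iic_add_Ioi pdf_integrable.integrableOn pdf_integrable.integrableOn]
    exact pdf_total
  have h2 : 0 < ∫ z in Set.Ioi c, stdGaussPDF z := by
    rw [setIntegral_pos_iff_support_of_nonneg_ae]
    · have : Function.support stdGaussPDF = univ := by
        ext z; simp [Function.mem_support, (pdf_pos z).ne']
      rw [this]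
      simp
    · filter_upwards with z using (pdf_pos z).le
    · exact pdf_integrable.integrableOn
  linarith

lemma cdf_eq_add (y : ℝ) :
    stdGaussCDF y = stdGaussCDF 0 + ∫ t in (0:ℝ)..y, stdGaussPDF t := by
  have := intervalIntegral.integral_Iic_sub_Iic (μ := volume) (f := stdGaussPDF)
    (a := (0:ℝ)) (b := y) pdf_integrable.integrableOn pdf_integrable.integrableOn
  unfold stdGaussCDF
  unfold stdGaussCDF at this
  linarith

lemma cdf_hasDerivAt (x : ℝ) : HasDerivAt stdGaussCDF (stdGaussPDF x) x := by
  have hfun : stdGaussCDF = fun y => stdGaussCDF 0 + ∫ t in (0:ℝ)..y, stdGaussPDF t := by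
    funext y; exact cdf_eq_add y
  rw [hfun]
  have hd : HasDerivAt (fun y => ∫ t in (0:ℝ)..y, stdGaussPDF t) (stdGaussPDF x) x :=
    intervalIntegral.integral_hasDerivAt_right (pdf_cont.intervalIntegrable _ _)
      (pdf_cont.stronglyMeasurable.stronglyMeasurableAtFilter)
      pdf_cont.continuousAt
  simpa using hd.const_add (stdGaussCDF 0)

end Helpers

theorem one_step_survival_unbiased_euler_N1
    (S₀ B σ μ h : ℝ) (hSB : S₀ < B) (hσ : 0 < σ) (hh : 0 < h)
    (q : ℝ → ℝ) (hq : Measurable q)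
    -- the Euler step
    (Shat : ℝ → ℝ) (hShat : ∀ z, Shat z = S₀ + μ * h + σ * Real.sqrt h * z)
    -- the Brownian bridge crossing probability
    (phat : ℝ → ℝ)
    (hphat : ∀ z, phat z =
      Real.exp (-2 * max (B - S₀) 0 * max (B - Shat z) 0 / (σ ^ 2 * h)))
    -- survival probability
    (ptil : ℝ) (hptil : ptil = stdGaussCDF ((B - S₀ - μ * h) / (σ * Real.sqrt h)))
    -- the one-step survival modified step
    (Φinv : ℝ → ℝ)
    (hleft : ∀ x, Φinv (stdGaussCDF x) = x)
    (hright : ∀ p ∈ Set.Ioo (0 : ℝ) 1, stdGaussCDF (Φinv p) = p)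
    (Stil : ℝ → ℝ) (hStil : ∀ u, Stil u = S₀ + μ * h + σ * Real.sqrt h * Φinv (ptil * u))
    (phatstar : ℝ → ℝ)
    (hphatstar : ∀ u, phatstar u =
      Real.exp (-2 * (B - S₀) * (B - Stil u) / (σ ^ 2 * h)))
    (hint : Integrable (fun z => stdGaussPDF z * ((1 - phat z) * q (Shat z)))) :
    ∫ z, stdGaussPDF z * ((1 - phat z) * q (Shat z))
      = ptil * ∫ u in Set.Ioo (0 : ℝ) 1, (1 - phatstar u) * q (Stil u) := by
  set c : ℝ := (B - S₀ - μ * h) / (σ * Real.sqrt h) with hc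
  have hsh : 0 < σ * Real.sqrt h := by positivity
  have hptil_pos : 0 < ptil := hptil ▸ cdf_pos c
  have hptil_lt : ptil < 1 := hptil ▸ cdf_lt_one c
  have hptil_ne : ptil ≠ 0 := ne_of_gt hptil_pos
  -- for z < c, Shat z < B; for z ≥ c, Shat z ≥ B
  have hShat_lt : ∀ z, z < c → Shat z < B := by
    intro z hz
    rw [hShat]
    have : σ * Real.sqrt h * z < σ * Real.sqrt h * c := by
      exact (mul_lt_mul_iff_right₀ hsh).mpr hz
    rw [hc, mul_div_cancel₀ _ (ne_of_gt hsh)] at this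
    linarith
  have hShat_ge : ∀ z, c ≤ z → B ≤ Shat z := by
    intro z hz
    rw [hShat]
    have : σ * Real.sqrt h * c ≤ σ * Real.sqrt h * z :=
      (mul_le_mul_iff_right₀ hsh).mpr hz
    rw [hc, mul_div_cancel₀ _ (ne_of_gt hsh)] at this
    linarith
  -- the integrand vanishes on Ici c
  have hvanish : ∀ z ∈ Set.Ici c,
      stdGaussPDF z * ((1 - phat z) * q (Shat z)) = 0 := by
    intro z hz
    have h1 : phat z = 1 := by
      rw [hphat,
        show max (B - Shat z) 0 = 0 from
          max_eq_right (by linarith [hShat_ge z hz]),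
        mul_zero, zero_div, Real.exp_zero]
    rw [h1]
    ring
  -- split the full integral
  have hsplit : ∫ z, stdGaussPDF z * ((1 - phat z) * q (Shat z))
      = ∫ z in Set.Iio c, stdGaussPDF z * ((1 - phat z) * q (Shat z)) := by
    rw [← intervalIntegral.integral_Iio_add_Ici hint.integrableOn hint.integrableOn,
      setIntegral_eq_zero_of_forall_eq_zero hvanish, add_zero]
  -- the substitution map
  set ψ : ℝ → ℝ := fun z => stdGaussCDF z / ptil with hψ
  have hψderiv : ∀ z ∈ Set.Iio c,
      HasDerivWithinAt ψ (stdGaussPDF z / ptil) (Set.Iio c) z := by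
    intro z _
    exact ((cdf_hasDerivAt z).div_const ptil).hasDerivWithinAt
  have hψinj : Set.InjOn ψ (Set.Iio c) := by
    intro a _ b _ hab
    have : stdGaussCDF a = stdGaussCDF b := by
      simp only [hψ] at hab
      exact (div_left_inj' hptil_ne).mp hab
    exact cdf_strictMono.injective this
  have himg : ψ '' Set.Iio c = Set.Ioo 0 1 := by
    ext u
    constructor
    · rintro ⟨z, hz, rfl⟩
      have h1 : 0 < stdGaussCDF z := cdf_pos z
      have h2 : stdGaussCDF z < ptil := hptil ▸ cdf_strictMono hz
      exact ⟨div_pos h1 hptil_pos, (div_lt_one hptil_pos).mpr h2⟩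
    · rintro ⟨hu0, hu1⟩
      have hpu : ptil * u ∈ Set.Ioo (0:ℝ) 1 := by
        constructor
        · positivity
        · calc ptil * u < ptil * 1 := by
                exact (mul_lt_mul_iff_right₀ hptil_pos).mpr hu1
            _ = ptil := mul_one _
            _ < 1 := hptil_lt
      refine ⟨Φinv (ptil * u), ?_, ?_⟩
      · by_contra hcon
        simp only [Set.mem_Iio, not_lt] at hcon
        have h1 : ptil ≤ stdGaussCDF (Φinv (ptil * u)) := by
          have := cdf_strictMono.monotone hcon
          rwa [← hptil] at this
        rw [hright _ hpu] at h1
        nlinarith [hpu.1]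
      · simp only [hψ]
        rw [hright _ hpu, mul_div_cancel_left₀ _ hptil_ne]
  -- change of variables
  have hcov := integral_image_eq_integral_abs_deriv_smul measurableSet_Iio hψderiv hψinj
    (fun u => (1 - phatstar u) * q (Stil u))
  rw [himg] at hcov
  rw [hsplit, hcov]
  rw [← integral_const_mul]
  apply setIntegral_congr_fun measurableSet_Iio
  intro z hz
  have hSB' : Shat z < B := hShat_lt z hz
  have hStilψ : Stil (ψ z) = Shat z := by
    rw [hStil, hψ]
    simp only [mul_div_cancel₀ _ hptil_ne, hleft, hShat]
  have hstar : phatstar (ψ z) = phat z := by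
    rw [hphatstar, hStilψ, hphat, max_eq_left (by linarith : (0:ℝ) ≤ B - S₀),
      max_eq_left (by linarith : (0:ℝ) ≤ B - Shat z)]
  have habs : |stdGaussPDF z / ptil| = stdGaussPDF z / ptil :=
    abs_of_pos (div_pos (pdf_pos z) hptil_pos)
  simp only [smul_eq_mul, habs, hstar, hStilψ]
  field_simp
end

section
/- Suppose PV : ℝ → ℝ and Q(·,u) : ℝ → ℝ (for each u ∈ (0,1)^N) are differentiable with derivatives PV' and Q'(·,u) that are L-Lipschitz uniformly in u, and Q(θ,·) is square-integrable with E[Q(θ,U)] = PV(θ) for U uniform on (0,1)^N. Then the Monte Carlo estimator \bar{P}_M(θ) = (1/M)∑_m Q(θ,U_m) with i.i.d. U_m satisfies Var(D_h^{(2)} \bar{P}_M(θ)) ≤ C/M for a constant C independent of h and M, where D_h^{(2)} f(θ) = (f(θ+h) − 2f(θ) + f(θ−h))/h². -/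
open MeasureTheory ProbabilityTheory Set

private lemma aux_indep_eval {ι : Type*} [Fintype ι] [DecidableEq ι] {α : ι → Type*}
    [∀ i, MeasurableSpace (α i)] (μ : ∀ i, Measure (α i)) [∀ i, IsProbabilityMeasure (μ i)]
    {i j : ι} (hij : i ≠ j) :
    IndepFun (fun f : ∀ k, α k => f i) (fun f => f j) (Measure.pi μ) := by
  rw [indepFun_iff_measure_inter_preimage_eq_mul]
  intro s t hs ht
  have heval : ∀ (k : ι) (u : Set (α k)),
      (fun f : ∀ l, α l => f k) ⁻¹' u
        = Set.pi Set.univ (Function.update (fun l => (univ : Set (α l))) k u) := by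
    intro k u
    exact Set.eval_preimage
  have hsingle : ∀ (k : ι) (u : Set (α k)),
      Measure.pi μ ((fun f : ∀ l, α l => f k) ⁻¹' u) = μ k u := by
    intro k u
    rw [heval, Measure.pi_pi]
    rw [show (Finset.univ : Finset ι) = insert k (Finset.univ.erase k) by
      simp [Finset.insert_erase]]
    rw [Finset.prod_insert (Finset.notMem_erase _ _)]
    simp only [Function.update_self]
    rw [Finset.prod_congr rfl (fun l hl => by
      rw [Function.update_of_ne (Finset.ne_of_mem_erase hl)])]
    simp
  have hinter : (fun f : ∀ l, α l => f i) ⁻¹' s ∩ (fun f => f j) ⁻¹' t =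
      Set.pi Set.univ
        (Function.update (Function.update (fun l => (univ : Set (α l))) i s) j t) := by
    ext f
    simp only [mem_inter_iff, mem_preimage, Set.mem_pi, mem_univ, forall_true_left]
    constructor
    · rintro ⟨h1, h2⟩ k
      rcases eq_or_ne k j with rfl | hkj
      · simpa using h2
      rcases eq_or_ne k i with rfl | hki
      · rw [Function.update_of_ne hkj, Function.update_self]; exact h1
      · rw [Function.update_of_ne hkj, Function.update_of_ne hki]; trivial
    · intro H
      refine ⟨?_, ?_⟩
      · have := H i
        rwa [Function.update_of_ne hij, Function.update_self] at this
      · have := H j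
        rwa [Function.update_self] at this
  rw [hinter, Measure.pi_pi, hsingle, hsingle]
  set F := fun k => μ k (Function.update (Function.update (fun l => (univ : Set (α l))) i s) j t k)
    with hF
  have h1 : ∏ k, F k = ∏ k ∈ ({i, j} : Finset ι), F k := by
    refine (Finset.prod_subset (Finset.subset_univ _) fun k _ hk => ?_).symm
    simp only [Finset.mem_insert, Finset.mem_singleton, not_or] at hk
    simp [hF, Function.update_of_ne hk.2, Function.update_of_ne hk.1]
  rw [h1, Finset.prod_pair hij]
  simp [hF, Function.update_of_ne hij]

private lemma aux_bound (q : ℝ → ℝ) (L : NNReal) (hd : Differentiable ℝ q)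
    (hl : LipschitzWith L (deriv q)) (θ h : ℝ) (hh : 0 < h) :
    |(q (θ + h) - 2 * q θ + q (θ - h)) / h ^ 2| ≤ (L : ℝ) := by
  set f := fun x => q x - q (x - h) with hf
  have hd2 : Differentiable ℝ (fun x => q (x - h)) :=
    fun x => ((hd (x - h)).comp x ((differentiableAt_id).sub_const h))
  have hfd : Differentiable ℝ f := hd.sub hd2
  have hderiv : ∀ x, deriv f x = deriv q x - deriv q (x - h) := by
    intro x
    rw [hf]
    rw [deriv_fun_sub (hd x) (hd2 x)]
    congr 1
    exact deriv_comp_sub_const q h x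
  have hK : ∀ x, ‖deriv f x‖₊ ≤ L * ‖h‖₊ := by
    intro x
    rw [hderiv x]
    have := hl.nndist_le x (x - h)
    simpa [nndist_eq_nnnorm, sub_sub_cancel] using this
  have hlip : LipschitzWith (L * ‖h‖₊) f := lipschitzWith_of_nnnorm_deriv_le hfd hK
  have key : |f (θ + h) - f θ| ≤ ((L : ℝ) * h) * h := by
    have h2 := hlip.dist_le_mul (θ + h) θ
    rw [Real.dist_eq] at h2
    calc |f (θ + h) - f θ| ≤ ((L * ‖h‖₊ : NNReal) : ℝ) * dist (θ + h) θ := h2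
    _ = (L : ℝ) * h * h := by
        rw [Real.dist_eq]
        push_cast
        rw [Real.norm_eq_abs, abs_of_pos hh]
        simp [add_sub_cancel_left, abs_of_pos hh]
  have hnum : f (θ + h) - f θ = q (θ + h) - 2 * q θ + q (θ - h) := by
    simp only [hf]; ring
  rw [abs_div, div_le_iff₀ (by positivity : (0:ℝ) < |h ^ 2|)]
  rw [hnum] at key
  calc |q (θ + h) - 2 * q θ + q (θ - h)| ≤ (L : ℝ) * h * h := key
  _ = (L : ℝ) * |h ^ 2| := by rw [abs_of_pos (by positivity : (0:ℝ) < h ^ 2)]; ring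

theorem stable_second_order_finite_difference
    (N : ℕ)
    (μcube : Measure (Fin N → ℝ))
    (hμ : μcube = Measure.pi fun _ => (volume : Measure ℝ).restrict (Set.Ioo 0 1))
    (PV : ℝ → ℝ) (Q : ℝ → (Fin N → ℝ) → ℝ) (L : NNReal)
    (hPV_diff : Differentiable ℝ PV)
    (hPV_lip : LipschitzWith L (deriv PV))
    (hQ_diff : ∀ u, Differentiable ℝ fun θ => Q θ u)
    (hQ_lip : ∀ u, LipschitzWith L (deriv fun θ => Q θ u))
    (hQ_meas : ∀ θ, Measurable (Q θ))
    (hQ_L2 : ∀ θ, MemLp (Q θ) 2 μcube)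
    (hunbiased : ∀ θ, ∫ u, Q θ u ∂μcube = PV θ) :
    ∃ C : ℝ, ∀ (h : ℝ), 0 < h → ∀ (M : ℕ), 0 < M → ∀ θ : ℝ,
      variance
        (fun us : Fin M → (Fin N → ℝ) =>
          (1 / (M : ℝ)) * ∑ m,
            (Q (θ + h) (us m) - 2 * Q θ (us m) + Q (θ - h) (us m)) / h ^ 2)
        (Measure.pi fun _ => μcube)
      ≤ C / M := by
  have hprob : IsProbabilityMeasure μcube := by
    rw [hμ]
    haveI : IsProbabilityMeasure ((volume : Measure ℝ).restrict (Set.Ioo 0 1)) := by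
      constructor
      rw [Measure.restrict_apply_univ, Real.volume_Ioo]
      norm_num
    exact MeasureTheory.Measure.pi.instIsProbabilityMeasure _
  refine ⟨(L : ℝ) ^ 2, ?_⟩
  intro h hh M hM θ
  haveI : IsProbabilityMeasure (Measure.pi fun _ : Fin M => μcube) :=
    MeasureTheory.Measure.pi.instIsProbabilityMeasure _
  set g : (Fin N → ℝ) → ℝ :=
    fun u => (Q (θ + h) u - 2 * Q θ u + Q (θ - h) u) / h ^ 2 with hg
  have hg_meas : Measurable g := by
    apply Measurable.div_const
    exact ((hQ_meas (θ + h)).sub ((hQ_meas θ).const_mul 2)).add (hQ_meas (θ - h))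
  have hg_bound : ∀ u, |g u| ≤ (L : ℝ) := by
    intro u
    exact aux_bound (fun x => Q x u) L (hQ_diff u) (hQ_lip u) θ h hh
  set X : Fin M → (Fin M → (Fin N → ℝ)) → ℝ := fun m us => g (us m) with hX
  have hX_meas : ∀ m, Measurable (X m) := fun m => hg_meas.comp (measurable_pi_apply m)
  have hX_mem : ∀ m : Fin M, MemLp (X m) 2 (Measure.pi fun _ : Fin M => μcube) := by
    intro m
    refine MemLp.of_bound (hX_meas m).aestronglyMeasurable (L : ℝ) ?_
    filter_upwards with us
    rw [Real.norm_eq_abs]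
    exact hg_bound (us m)
  have hX_indep : Set.Pairwise ↑(Finset.univ : Finset (Fin M))
      fun i j => IndepFun (X i) (X j) (Measure.pi fun _ : Fin M => μcube) := by
    intro i _ j _ hij
    have hbase := aux_indep_eval (fun _ : Fin M => μcube) hij
    exact hbase.comp hg_meas hg_meas
  have hvar_sum : variance (∑ m, X m) (Measure.pi fun _ : Fin M => μcube)
      = ∑ m, variance (X m) (Measure.pi fun _ : Fin M => μcube) :=
    IndepFun.variance_sum (fun m _ => hX_mem m) hX_indep
  have hvar_single : ∀ m : Fin M,
      variance (X m) (Measure.pi fun _ : Fin M => μcube) ≤ (L : ℝ) ^ 2 := by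
    intro m
    refine le_trans (variance_le_expectation_sq (hX_meas m).aestronglyMeasurable) ?_
    have hint : Integrable (fun us => X m us ^ 2) (Measure.pi fun _ : Fin M => μcube) := by
      simpa [sq] using (hX_mem m).integrable_sq
    calc ∫ us, (X m ^ 2) us ∂(Measure.pi fun _ : Fin M => μcube)
        ≤ ∫ _, (L : ℝ) ^ 2 ∂(Measure.pi fun _ : Fin M => μcube) := by
          refine integral_mono hint (integrable_const _) ?_
          intro us
          have := hg_bound (us m)
          simpa [hX, sq_abs] using sq_le_sq' (neg_le_of_abs_le this) (le_of_abs_le this)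
    _ = (L : ℝ) ^ 2 := by simp
  have hrw : (fun us : Fin M → (Fin N → ℝ) =>
        (1 / (M : ℝ)) * ∑ m, (Q (θ + h) (us m) - 2 * Q θ (us m) + Q (θ - h) (us m)) / h ^ 2)
      = fun us => (1 / (M : ℝ)) * (∑ m, X m) us := by
    funext us
    simp [hX, hg]
  rw [hrw, variance_const_mul]
  have hMpos : (0 : ℝ) < M := Nat.cast_pos.mpr hM
  have hsum_le : ∑ m, variance (X m) (Measure.pi fun _ : Fin M => μcube) ≤ M * (L : ℝ) ^ 2 := by
    calc ∑ m : Fin M, variance (X m) (Measure.pi fun _ : Fin M => μcube)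
        ≤ ∑ _m : Fin M, (L : ℝ) ^ 2 := Finset.sum_le_sum fun m _ => hvar_single m
    _ = M * (L : ℝ) ^ 2 := by simp [mul_comm]
  rw [hvar_sum]
  calc (1 / (M : ℝ)) ^ 2 * ∑ m, variance (X m) (Measure.pi fun _ : Fin M => μcube)
      ≤ (1 / (M : ℝ)) ^ 2 * (M * (L : ℝ) ^ 2) := by
        exact mul_le_mul_of_nonneg_left hsum_le (by positivity)
  _ = (L : ℝ) ^ 2 / M := by field_simp
end
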